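/- Let A₁, …, A_k ∈ GL_n(ℝ), let Λ_k ⊂ ℝ^{n(k+1)} be the lattice spanned by the block matrix M_{A₁,…,A_k}, let p₁ be the projection onto the first nk coordinates and p₂ the projection onto the last n coordinates, and let W^k = (−1/2, 1/2]^{nk}. Then (Â_k ∘ ⋯ ∘ Â₁)(ℤⁿ) = p₂( Λ_k ∩ p₁^{-1}(W^k) ). -/
import Mathlib


/-- The rounding projection `P : ℝ → ℤ`, with `P t - 1/2 < t ≤ P t + 1/2`. -/
noncomputable def roundHalf (t : ℝ) : ℤ := ⌈t - 1/2⌉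

/-- The discretization `Â = π ∘ A` of a matrix `A`, as a map `ℤⁿ → ℤⁿ`. -/
noncomputable def disc {n : ℕ} (A : Matrix (Fin n) (Fin n) ℝ) (x : Fin n → ℤ) :
    Fin n → ℤ :=
  fun i => roundHalf (A.mulVec (fun j => (x j : ℝ)) i)

/-- The composition `Â_k ∘ ⋯ ∘ Â₁` of the discretizations. -/
noncomputable def discComp {n : ℕ} :
    (k : ℕ) → (Fin k → Matrix (Fin n) (Fin n) ℝ) → (Fin n → ℤ) → (Fin n → ℤ)
  | 0, _ => id
  | k + 1, A => disc (A (Fin.last k)) ∘ discComp k (fun i => A i.castSucc)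

/-- The linear map `M_{A₁,…,A_k}` on `ℝ^{n(k+1)}` (viewed in blocks): diagonal blocks
`A₁,…,A_k, Id`, superdiagonal blocks `−Id`. -/
noncomputable def Mblock {n k : ℕ} (A : Fin k → Matrix (Fin n) (Fin n) ℝ)
    (x : Fin (k + 1) → Fin n → ℝ) : Fin (k + 1) → Fin n → ℝ :=
  fun i => if h : (i : ℕ) < k
    then (A ⟨i, h⟩).mulVec (x i) - x ⟨(i : ℕ) + 1, Nat.succ_lt_succ h⟩
    else x i

/-- The lattice `Λ_k = M_{A₁,…,A_k} ℤ^{n(k+1)}`. -/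
noncomputable def latticeM {n k : ℕ} (A : Fin k → Matrix (Fin n) (Fin n) ℝ) :
    Set (Fin (k + 1) → Fin n → ℝ) :=
  Mblock A '' {x | ∀ i j, ∃ m : ℤ, x i j = (m : ℝ)}

noncomputable def chain {n k : ℕ} (A : Fin k → Matrix (Fin n) (Fin n) ℝ)
    (z : Fin n → ℤ) (i : Fin (k + 1)) : Fin n → ℤ :=
  discComp i.val (fun j => A (j.castLE (Nat.lt_succ_iff.mp i.isLt))) z

lemma chain_last {n k : ℕ} (A : Fin k → Matrix (Fin n) (Fin n) ℝ) (z : Fin n → ℤ) :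
    chain A z (Fin.last k) = discComp k A z := rfl

lemma chain_succ {n k : ℕ} (A : Fin k → Matrix (Fin n) (Fin n) ℝ) (z : Fin n → ℤ)
    (i : ℕ) (h : i < k) :
    chain A z ⟨i + 1, Nat.succ_lt_succ h⟩
      = disc (A ⟨i, h⟩) (chain A z ⟨i, Nat.lt_succ_of_lt h⟩) := rfl

lemma roundHalf_bounds (t : ℝ) : -(1/2 : ℝ) < t - roundHalf t ∧ t - roundHalf t ≤ 1/2 := by
  have h1 := Int.le_ceil (t - 1/2)
  have h2 := Int.ceil_lt_add_one (t - 1/2)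
  unfold roundHalf
  constructor <;> linarith

lemma roundHalf_eq (t : ℝ) (m : ℤ) (h1 : -(1/2 : ℝ) < t - m) (h2 : t - m ≤ 1/2) :
    roundHalf t = m := by
  rw [roundHalf, Int.ceil_eq_iff]
  constructor <;> push_cast <;> linarith
/-- `(Â_k ∘ ⋯ ∘ Â₁)(ℤⁿ) = p₂(Λ_k ∩ p₁⁻¹(W^k))`, where `p₁` is the
projection on the first `nk` coordinates, `p₂` the projection on the last `n`
coordinates, and `W^k = (−1/2,1/2]^{nk}`. -/
theorem stmt8 (n k : ℕ) (A : Fin k → Matrix (Fin n) (Fin n) ℝ)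
    (hA : ∀ i, IsUnit (A i).det) :
    (fun v : Fin n → ℤ => fun j => (v j : ℝ)) '' Set.range (discComp k A) =
      (fun x : Fin (k + 1) → Fin n → ℝ => x (Fin.last k)) ''
        (latticeM A ∩
          (fun x : Fin (k + 1) → Fin n → ℝ => fun i : Fin k => x i.castSucc) ⁻¹'
            {y : Fin k → Fin n → ℝ | ∀ i j, -(1/2 : ℝ) < y i j ∧ y i j ≤ 1/2}) := by
  ext v
  simp only [Set.mem_image, Set.mem_range, Set.mem_inter_iff, Set.mem_preimage,
    Set.mem_setOf_eq, latticeM]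
  constructor
  · rintro ⟨w, ⟨z, rfl⟩, rfl⟩
    refine ⟨Mblock A (fun i j => ((chain A z i j : ℤ) : ℝ)),
      ⟨⟨_, fun i j => ⟨chain A z i j, rfl⟩, rfl⟩, ?_⟩, ?_⟩
    · intro i j
      have hi : (i : ℕ) < k := i.isLt
      simp only [Mblock, Fin.coe_castSucc, dif_pos hi]
      have hc : chain A z ⟨(i : ℕ) + 1, Nat.succ_lt_succ hi⟩ j
          = roundHalf ((A ⟨(i : ℕ), hi⟩).mulVec
              (fun j => ((chain A z ⟨(i : ℕ), Nat.lt_succ_of_lt hi⟩ j : ℤ) : ℝ)) j) := by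
        rw [chain_succ A z i hi]; rfl
      have hb := roundHalf_bounds ((A ⟨(i : ℕ), hi⟩).mulVec
          (fun j => ((chain A z ⟨(i : ℕ), Nat.lt_succ_of_lt hi⟩ j : ℤ) : ℝ)) j)
      have e1 : i.castSucc = (⟨(i : ℕ), Nat.lt_succ_of_lt hi⟩ : Fin (k + 1)) := rfl
      simp only [Pi.sub_apply, e1, hc]
      exact hb
    · have : Mblock A (fun i j => ((chain A z i j : ℤ) : ℝ)) (Fin.last k)
          = fun j => ((chain A z (Fin.last k) j : ℤ) : ℝ) := by
        simp [Mblock]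
      rw [this, chain_last]
  · rintro ⟨y, ⟨⟨x, hxint, rfl⟩, hW⟩, rfl⟩
    choose m hm using hxint
    have hx : x = fun i j => ((m i j : ℤ) : ℝ) := by
      funext i j; exact hm i j
    subst hx
    have key : ∀ i : Fin (k + 1), m i = chain A (m 0) i := by
      intro i
      induction i using Fin.induction with
      | zero => rfl
      | succ i ih =>
        have hi : (i : ℕ) < k := i.isLt
        have hW' := hW i
        simp only [Mblock, Fin.coe_castSucc, dif_pos hi, Pi.sub_apply] at hW'
        have hstep : m i.succ = disc (A i) (m i.castSucc) := by
          funext j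
          refine (roundHalf_eq _ _ (hW' j).1 (hW' j).2).symm
        rw [hstep, ih]
        have : (A i) = A ⟨(i : ℕ), hi⟩ := rfl
        rw [this]
        exact (chain_succ A (m 0) i hi).symm
    refine ⟨discComp k A (m 0), ⟨m 0, rfl⟩, ?_⟩
    have hlast : Mblock A (fun i j => ((m i j : ℤ) : ℝ)) (Fin.last k)
        = fun j => ((m (Fin.last k) j : ℤ) : ℝ) := by
      simp [Mblock]
    rw [hlast, key (Fin.last k), chain_last]
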